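/- Let G = (V,E) be a median graph with an odd number of vertices and R = (R_v)_{v ∈ V} an intermediate profile of linear orders on a finite set A. Then the majority relation of R (where a ≻ b iff strictly more voters prefer a to b than b to a) is transitive; in particular, it is a strict linear order on A. -/

import Mathlib

open SimpleGraph

/-- `Geo G u w v` : vertex `w` lies geodesically between `u` and `v`
(i.e. on some shortest path from `u` to `v`). -/
def Geo {V : Type*} (G : SimpleGraph V) (u w v : V) : Prop :=
  G.dist u w + G.dist w v = G.dist u v

/-- A set of vertices is geodesically convex if it contains every vertex
lying on a shortest path between two of its members. -/
def GConvex {V : Type*} (G : SimpleGraph V) (C : Set V) : Prop :=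
  ∀ u ∈ C, ∀ v ∈ C, ∀ w, Geo G u w v → w ∈ C

/-- A profile of strict preference relations is intermediate on `G` if every
set `V_{ab}` of voters preferring `a` to `b` is geodesically convex. -/
def Intermediate {V A : Type*} (G : SimpleGraph V) (R : V → A → A → Prop) : Prop :=
  ∀ a b : A, GConvex G {i | R i a b}

/-- A median graph: connected, and every triple of vertices has a unique median. -/
def MedianGraph {V : Type*} (G : SimpleGraph V) : Prop :=
  G.Connected ∧ ∀ u v w : V, ∃! m : V, Geo G u m v ∧ Geo G u m w ∧ Geo G v m w

/-- Helly property for geodesically convex sets in a median graph. -/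
lemma helly3 {V : Type*} (G : SimpleGraph V) (hG : MedianGraph G)
    {C1 C2 C3 : Set V} (h1 : GConvex G C1) (h2 : GConvex G C2) (h3 : GConvex G C3)
    (h12 : (C1 ∩ C2).Nonempty) (h23 : (C2 ∩ C3).Nonempty) (h13 : (C1 ∩ C3).Nonempty) :
    ∃ m, m ∈ C1 ∧ m ∈ C2 ∧ m ∈ C3 := by
  obtain ⟨u, hu1, hu2⟩ := h12
  obtain ⟨v, hv2, hv3⟩ := h23
  obtain ⟨w, hw1, hw3⟩ := h13
  obtain ⟨m, ⟨huv, huw, hvw⟩, -⟩ := hG.2 u v w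
  exact ⟨m, h1 u hu1 w hw1 m huw, h2 u hu2 v hv2 m huv, h3 v hv3 w hw3 m hvw⟩

/-- An intermediate profile on a median graph with an odd number of voters has
a transitive strict majority relation; in particular, it is a strict linear
order on the alternatives. -/
theorem stmt4 {V A : Type*} [Fintype V] (G : SimpleGraph V) (hG : MedianGraph G)
    (hodd : Odd (Fintype.card V))
    (R : V → A → A → Prop) (hR : ∀ i, IsStrictTotalOrder A (R i))
    (hint : Intermediate G R) :
    Transitive (fun a b : A => {i | R i a b}.ncard > {i | R i b a}.ncard) ∧
    IsStrictTotalOrder A (fun a b : A => {i | R i a b}.ncard > {i | R i b a}.ncard) := by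
  have hN : (Set.univ : Set V).ncard = Fintype.card V := by
    rw [Set.ncard_univ, Nat.card_eq_fintype_card]
  -- complement relation for distinct alternatives
  have hcompl : ∀ a b : A, a ≠ b → {i | R i b a} = {i | R i a b}ᶜ := by
    intro a b hab
    ext i
    simp only [Set.mem_setOf_eq, Set.mem_compl_iff]
    constructor
    · intro h h'
      exact (hR i).irrefl a ((hR i).trans _ _ _ h' h)
    · intro h
      rcases @trichotomous _ (R i) (hR i).toTrichotomous a b with h' | h' | h'
      · exact absurd h' h
      · exact absurd h' hab
      · exact h'
  have hsum : ∀ a b : A, a ≠ b →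
      {i | R i a b}.ncard + {i | R i b a}.ncard = Fintype.card V := by
    intro a b hab
    rw [hcompl a b hab, Set.ncard_add_ncard_compl, Nat.card_eq_fintype_card]
  -- two large sets intersect
  have hbig : ∀ S T : Set V, 2 * S.ncard > Fintype.card V →
      2 * T.ncard > Fintype.card V → (S ∩ T).Nonempty := by
    intro S T hS hT
    rw [Set.nonempty_iff_ne_empty]
    intro h
    have hdisj : Disjoint S T := Set.disjoint_iff_inter_eq_empty.mpr h
    have hle : (S ∪ T).ncard ≤ (Set.univ : Set V).ncard :=
      Set.ncard_le_ncard (Set.subset_univ _) (Set.toFinite _)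
    rw [Set.ncard_union_eq hdisj (Set.toFinite _) (Set.toFinite _), hN] at hle
    omega
  obtain ⟨k, hk⟩ := hodd
  have htr : Transitive (fun a b : A => {i | R i a b}.ncard > {i | R i b a}.ncard) := by
    intro a b c hab hbc
    by_contra hac
    simp only [gt_iff_lt, not_lt] at hab hbc hac
    have hab' : a ≠ b := by rintro rfl; exact lt_irrefl _ hab
    have hbc' : b ≠ c := by rintro rfl; exact lt_irrefl _ hbc
    have hac' : a ≠ c := by rintro rfl; exact Nat.lt_asymm hab hbc
    have s1 := hsum a b hab'
    have s2 := hsum b c hbc'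
    have s3 := hsum a c hac'
    have b1 : 2 * {i | R i a b}.ncard > Fintype.card V := by omega
    have b2 : 2 * {i | R i b c}.ncard > Fintype.card V := by omega
    have b3 : 2 * {i | R i c a}.ncard > Fintype.card V := by omega
    obtain ⟨m, hm1, hm2, hm3⟩ := helly3 G hG (hint a b) (hint b c) (hint c a)
      (hbig _ _ b1 b2) (hbig _ _ b2 b3) (hbig _ _ b1 b3)
    exact (hR m).irrefl a ((hR m).trans _ _ _ ((hR m).trans _ _ _ hm1 hm2) hm3)
  refine ⟨htr, { trichotomous := fun a b h1 h2 => ?_,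
                 toIsStrictOrder := { toIrrefl := ⟨fun a => lt_irrefl _⟩,
                                      toIsTrans := ⟨fun a b c h1 h2 => htr h1 h2⟩ } }⟩
  rcases eq_or_ne a b with rfl | hab
  · rfl
  · have := hsum a b hab
    rcases Nat.lt_trichotomy {i | R i b a}.ncard {i | R i a b}.ncard with h | h | h
    · exact absurd h h1
    · omega
    · exact absurd h h2
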